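/- Let m >= 4, set f_m = floor((2^m - m - 1)/(m + 1)), let K be a finite field with 2^m elements, alpha a generator of K^×, and identify F_2^m with K via the basis 1, alpha, ..., alpha^{m-1}. Define the (m+1)x(m+1) matrices over F_2: N_0 with rows (1, 0), (0, 1), (0, alpha), ..., (0, alpha^{m-1}) (the identity matrix under this identification), and for 1 <= i <= f_m, N_i with rows (1, alpha^{(m+1)i-1}), (0, alpha^{(m+1)i} - alpha^{(m+1)i-1}), ..., (0, alpha^{(m+1)i+m-1} - alpha^{(m+1)i-1}), field elements written as coordinate vectors in F_2^m. Then each N_i is invertible with first column e_1, so N_i lies in PAut(H_m), and the set P = {N_i^{-1} : 0 <= i <= f_m} is an f_m-PD-set of size f_m + 1 for the binary linear Hadamard code H_m with respect to the information set I_m. -/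

import Mathlib

/-!
The binary linear Hadamard code `H_m` of length `2^m`: its coordinate positions are
indexed by the vectors `w = (1, v)` with `v ∈ F_2^m` (the columns of the generator
matrix), which we identify with `v : Fin m → ZMod 2`.  Its permutation automorphism
group is identified with the subgroup of `GL(m+1, F_2)` of invertible matrices whose
first column is `e_1`; such a matrix `M` acts on positions by `w ↦ w·M`.
-/

/-- Membership in `PAut(H_m)`, viewed as matrices: `M` is invertible and its first
column is `e₁`. -/
def inPAutH (m : ℕ) (M : Matrix (Fin (m + 1)) (Fin (m + 1)) (ZMod 2)) : Prop :=
  IsUnit M ∧ ∀ r, M r 0 = if r = 0 then 1 else 0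

/-- The action of a matrix `M ∈ PAut(H_m)` on the coordinate position labelled by
`w = (1, v)`: the position labelled `v` is sent to the position labelled by the last
`m` coordinates of the row vector `(1, v) · M` (its first coordinate is again `1`). -/
def hadAct (m : ℕ) (M : Matrix (Fin (m + 1)) (Fin (m + 1)) (ZMod 2))
    (v : Fin m → ZMod 2) : Fin m → ZMod 2 :=
  fun j => Matrix.vecMul (Fin.cons 1 v) M j.succ

/-- The information set `I_m = {e₁, e₁+e₂, …, e₁+e_{m+1}}` for `H_m`, in terms of the
labels `v` (namely `v = 0` and `v = e_j`, `j = 1, …, m`). -/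
def hadInfo (m : ℕ) : Finset (Fin m → ZMod 2) :=
  insert 0 (Finset.univ.image fun j : Fin m => Pi.single j 1)

/-- For a matrix `M` with rows `m₁, …, m_{m+1}`, the matrix `M^*` has first row `m₁`
and `i`-th row `m₁ + m_i` for `i ≥ 2`. -/
def starB (m : ℕ) (M : Matrix (Fin (m + 1)) (Fin (m + 1)) (ZMod 2)) :
    Matrix (Fin (m + 1)) (Fin (m + 1)) (ZMod 2) :=
  fun r c => if r = 0 then M 0 c else M 0 c + M r c


open Polynomial

private lemma zmod2cases (a : ZMod 2) : a = 0 ∨ a = 1 := by revert a; decide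

private lemma pow_bound {m : ℕ} (hm : 4 ≤ m) : m + 2 ≤ 2 ^ m := by
  have h1 : m - 1 < 2 ^ (m - 1) := Nat.lt_two_pow_self
  have h2 : 2 ^ m = 2 ^ (m - 1) * 2 := by
    rw [← pow_succ]; congr 1; omega
  omega

private lemma vmlem {m : ℕ} (u : Fin (m + 1) → ZMod 2)
    (M : Matrix (Fin (m + 1)) (Fin (m + 1)) (ZMod 2)) (jc : Fin (m + 1)) :
    Matrix.vecMul u M jc = u 0 * M 0 jc + ∑ j : Fin m, u j.succ * M j.succ jc := by
  simp [Matrix.vecMul, dotProduct, Fin.sum_univ_succ]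

private lemma cruxlem {m : ℕ} {K : Type} [Field K] (hm : 4 ≤ m) (αK : K)
    (hα0 : αK ≠ 0) (hα1 : αK ≠ 1) (h2 : (2 : K) = 0)
    (ψ : (Fin m → ZMod 2) → K)
    (hψ : ∀ v, ψ v = ∑ j : Fin m, if v j = 1 then αK ^ (j : ℕ) else 0)
    (hinj : Function.Injective ψ)
    (v : Fin m → ZMod 2)
    (hv : αK * ψ v = if (∑ j, v j) = 1 then 1 else 0) : v = 0 := by
  haveI : CharP K 2 := (CharP.charP_iff_prime_eq_zero Nat.prime_two).mpr h2
  set φ : ZMod 2 →+* K := ZMod.castHom dvd_rfl K with hφdef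
  have hφ01 : ∀ (a : ZMod 2) (x : K), (if a = 1 then x else 0) = φ a * x := by
    intro a x; rcases zmod2cases a with h | h <;> subst h <;> simp
  have hψ' : ∀ v, ψ v = ∑ j : Fin m, φ (v j) * αK ^ (j : ℕ) := by
    intro v; rw [hψ]; exact Finset.sum_congr rfl fun j _ => hφ01 _ _
  have hψ0 : ψ 0 = 0 := by simp [hψ]
  have hsmall : ∀ g : (ZMod 2)[X], g.natDegree < m → g.eval₂ φ αK = 0 → g = 0 := by
    intro g hdeg h0
    have he : g.eval₂ φ αK = ∑ i ∈ Finset.range m, φ (g.coeff i) * αK ^ i :=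
      Polynomial.eval₂_eq_sum_range' φ hdeg αK
    have hz : (fun j : Fin m => g.coeff (j : ℕ)) = 0 := by
      apply hinj
      rw [hψ0, hψ', Fin.sum_univ_eq_sum_range (fun i => φ (g.coeff i) * αK ^ i), ← he, h0]
    ext n
    rcases Nat.lt_or_ge n m with hn | hn
    · have := congrFun hz ⟨n, hn⟩
      simpa using this
    · simp [Polynomial.coeff_eq_zero_of_natDegree_lt (lt_of_lt_of_le hdeg hn)]
  rcases zmod2cases (∑ j, v j) with hp | hp
  · rw [hp] at hv
    norm_num at hv
    have h0 : ψ v = 0 := hv.resolve_left hα0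
    exact hinj (h0.trans hψ0.symm)
  · rw [hp, if_pos rfl] at hv
    set q : (ZMod 2)[X] := 1 + ∑ j : Fin m, Polynomial.C (v j) * Polynomial.X ^ ((j : ℕ) + 1)
      with hq
    have hq0 : q.coeff 0 = 1 := by
      simp [hq, Polynomial.finset_sum_coeff, Polynomial.coeff_C_mul, Polynomial.coeff_X_pow]
    have hqne : q ≠ 0 := fun h => by simp [h] at hq0
    have hqdeg : q.natDegree ≤ m := by
      refine le_trans (Polynomial.natDegree_add_le _ _) ?_
      rw [Polynomial.natDegree_one]
      refine max_le (by omega) ?_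
      refine Polynomial.natDegree_sum_le_of_forall_le _ _ fun j _ => ?_
      refine le_trans (Polynomial.natDegree_C_mul_le _ _) ?_
      rw [Polynomial.natDegree_X_pow]
      have := j.isLt; omega
    have heval1 : q.eval 1 = 0 := by
      rw [hq]
      rw [Polynomial.eval_add, Polynomial.eval_one, Polynomial.eval_finset_sum]
      have : ∀ j : Fin m, (Polynomial.C (v j) * Polynomial.X ^ ((j : ℕ) + 1)).eval 1 = v j := by
        intro j; simp
      rw [Finset.sum_congr rfl fun j _ => this j, hp]
      decide
    have hevalα : q.eval₂ φ αK = 0 := by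
      rw [hq, Polynomial.eval₂_add, Polynomial.eval₂_one, Polynomial.eval₂_finset_sum]
      have : ∀ j : Fin m, (Polynomial.C (v j) * Polynomial.X ^ ((j : ℕ) + 1)).eval₂ φ αK
          = αK * (φ (v j) * αK ^ (j : ℕ)) := by
        intro j
        rw [Polynomial.eval₂_mul, Polynomial.eval₂_C, Polynomial.eval₂_X_pow, pow_succ]
        ring
      rw [Finset.sum_congr rfl fun j _ => this j, ← Finset.mul_sum, ← hψ' v, hv,
        one_add_one_eq_two]
      exact h2
    obtain ⟨g, hg⟩ := Polynomial.dvd_iff_isRoot.mpr heval1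
    have hgne : g ≠ 0 := by
      rintro rfl
      rw [mul_zero] at hg
      exact hqne hg
    have hgd : g.natDegree < m := by
      have hd := Polynomial.natDegree_mul (Polynomial.X_sub_C_ne_zero 1) hgne
      rw [← hg, Polynomial.natDegree_X_sub_C] at hd
      omega
    have hgα : g.eval₂ φ αK = 0 := by
      have h := congrArg (Polynomial.eval₂ φ αK) hg
      rw [hevalα, Polynomial.eval₂_mul, Polynomial.eval₂_sub, Polynomial.eval₂_X,
        Polynomial.eval₂_C] at h
      have hne : αK - φ 1 ≠ 0 := by rw [map_one]; exact sub_ne_zero.mpr hα1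
      rcases mul_eq_zero.mp h.symm with h' | h'
      · exact absurd h' hne
      · exact h'
    exact absurd (hsmall g hgd hgα) hgne

/-- Explicit construction of an `f_m`-PD-set of minimum size `f_m + 1` for `H_m`,
where `f_m = ⌊(2^m - m - 1)/(m + 1)⌋`.  Here `K` is a finite field with `2^m`
elements, `α` a generator of `Kˣ`, and `F_2^m` is identified with `K` via the basis
`1, α, …, α^{m-1}`: the identification is given by the additive bijection
`c : K ≃+ (Fin m → ZMod 2)` sending `x` to its coordinates, i.e.
`x = ∑_j c(x)_j · α^j`.  The matrices `N_0` (rows `(1,0), (0,1), (0,α), …,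
(0,α^{m-1})`) and `N_i` for `1 ≤ i ≤ f_m` (rows `(1, α^{(m+1)i-1})`,
`(0, α^{(m+1)i+j} - α^{(m+1)i-1})` for `j = 0, …, m-1`) all lie in `PAut(H_m)`, and
`P = {N_i⁻¹ : 0 ≤ i ≤ f_m}` is an `f_m`-PD-set of size `f_m + 1` for `H_m` with
respect to the information set `I_m`. -/
theorem stmt5 (m : ℕ) (hm : 4 ≤ m) (K : Type) [Field K] [Fintype K]
    (hK : Fintype.card K = 2 ^ m)
    (α : Kˣ) (hα : ∀ x : Kˣ, x ∈ Subgroup.zpowers α)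
    (c : K ≃+ (Fin m → ZMod 2))
    (hc : ∀ x : K, x = ∑ j : Fin m, if c x j = 1 then (α : K) ^ (j : ℕ) else 0)
    (N : ℕ → Matrix (Fin (m + 1)) (Fin (m + 1)) (ZMod 2))
    (hN0 : N 0 = Matrix.of (Fin.cons (Fin.cons 1 (c 0))
      (fun j : Fin m => Fin.cons 0 (c ((α : K) ^ (j : ℕ))))))
    (hNi : ∀ i, 1 ≤ i → N i = Matrix.of (Fin.cons
      (Fin.cons 1 (c ((α : K) ^ ((m + 1) * i - 1))))
      (fun j : Fin m => Fin.cons 0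
        (c ((α : K) ^ ((m + 1) * i + (j : ℕ)) - (α : K) ^ ((m + 1) * i - 1)))))) :
    (∀ i, i ≤ (2 ^ m - m - 1) / (m + 1) → inPAutH m (N i)) ∧
    (∀ i j, i ≤ (2 ^ m - m - 1) / (m + 1) → j ≤ (2 ^ m - m - 1) / (m + 1) →
      (N i)⁻¹ = (N j)⁻¹ → i = j) ∧
    (∀ E : Finset (Fin m → ZMod 2), E.card = (2 ^ m - m - 1) / (m + 1) →
      ∃ i ≤ (2 ^ m - m - 1) / (m + 1), ∀ v ∈ E, hadAct m (N i)⁻¹ v ∉ hadInfo m) := by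
  classical
  have hzadd : ∀ a : ZMod 2, a + a = 0 := by decide
  have haddself : ∀ x : K, x + x = 0 := by
    intro x
    apply c.injective
    rw [map_add, map_zero]
    funext l
    exact hzadd (c x l)
  have h2K : (2 : K) = 0 := by rw [← one_add_one_eq_two]; exact haddself 1
  haveI : CharP K 2 := (CharP.charP_iff_prime_eq_zero Nat.prime_two).mpr h2K
  set φ : ZMod 2 →+* K := ZMod.castHom dvd_rfl K with hφdef
  have hφ01 : ∀ (a : ZMod 2) (x : K), (if a = 1 then x else 0) = φ a * x := by
    intro a x; rcases zmod2cases a with h | h <;> subst h <;> simp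
  have hψ : ∀ v : Fin m → ZMod 2,
      (c.symm v : K) = ∑ j : Fin m, φ (v j) * (α : K) ^ (j : ℕ) := by
    intro v
    have h := hc (c.symm v)
    rw [c.apply_symm_apply] at h
    rw [h]
    exact Finset.sum_congr rfl fun j _ => hφ01 _ _
  have horder : orderOf α = 2 ^ m - 1 := by
    rw [orderOf_eq_card_of_forall_mem_zpowers hα, Nat.card_eq_fintype_card,
      Fintype.card_units, hK]
  have hm2 : m + 2 ≤ 2 ^ m := pow_bound hm
  have hαne0 : (α : K) ≠ 0 := α.ne_zero
  have hαne1 : (α : K) ≠ 1 := by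
    intro h
    have h1 : α = 1 := Units.ext h
    rw [h1, orderOf_one] at horder
    omega
  have hpowinj : ∀ a b : ℕ, a ≤ 2 ^ m - 2 → b ≤ 2 ^ m - 2 →
      (α : K) ^ a = (α : K) ^ b → a = b := by
    intro a b ha hb hab
    have h' : α ^ a = α ^ b := Units.ext (by
      rw [Units.val_pow_eq_pow_val, Units.val_pow_eq_pow_val]; exact hab)
    exact pow_injOn_Iio_orderOf
      (by simp only [Set.mem_Iio, horder]; omega)
      (by simp only [Set.mem_Iio, horder]; omega) h'
  set F := (2 ^ m - m - 1) / (m + 1) with hF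
  have hFb : (m + 1) * F + m ≤ 2 ^ m - 1 := by
    have h1 : F * (m + 1) ≤ 2 ^ m - m - 1 := Nat.div_mul_le_self _ _
    have h2 : (m + 1) * F = F * (m + 1) := Nat.mul_comm _ _
    omega
  have hbnd : ∀ i, i ≤ F → (m + 1) * i + m - 1 ≤ 2 ^ m - 2 := by
    intro i hi
    have h1 : (m + 1) * i ≤ (m + 1) * F := Nat.mul_le_mul_left _ hi
    omega
  -- entries of N i for i ≥ 1
  have hent0 : ∀ i, 1 ≤ i → N i 0 0 = 1 := by
    intro i hi; rw [hNi i hi]; simp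
  have hentj0 : ∀ i, 1 ≤ i → ∀ j : Fin m, N i j.succ 0 = 0 := by
    intro i hi j; rw [hNi i hi]; simp
  have hent0l : ∀ i, 1 ≤ i → ∀ l : Fin m,
      N i 0 l.succ = c ((α : K) ^ ((m + 1) * i - 1)) l := by
    intro i hi l; rw [hNi i hi]; simp
  have hentjl : ∀ i, 1 ≤ i → ∀ j l : Fin m,
      N i j.succ l.succ
        = c ((α : K) ^ ((m + 1) * i + (j : ℕ)) - (α : K) ^ ((m + 1) * i - 1)) l := by
    intro i hi j l; rw [hNi i hi]; simp
  -- the key vecMul computation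
  have L1 : ∀ i, 1 ≤ i → ∀ (a : ZMod 2) (v : Fin m → ZMod 2),
      Matrix.vecMul (Fin.cons a v) (N i) = Fin.cons a
        (c (φ a * (α : K) ^ ((m + 1) * i - 1)
          + (α : K) ^ ((m + 1) * i) * (c.symm v)
          - φ (∑ j, v j) * (α : K) ^ ((m + 1) * i - 1))) := by
    intro i hi a v
    funext jc
    refine Fin.cases ?_ ?_ jc
    · rw [vmlem, Fin.cons_zero, Fin.cons_zero, hent0 i hi]
      rw [Finset.sum_congr rfl fun j (_ : j ∈ Finset.univ) => by
        rw [Fin.cons_succ, hentj0 i hi j, mul_zero]]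
      simp
    · intro l
      rw [vmlem, Fin.cons_zero, Fin.cons_succ, hent0l i hi]
      rw [Finset.sum_congr rfl fun j (_ : j ∈ Finset.univ) => by
        rw [Fin.cons_succ, hentjl i hi j l]]
      have hmulc : ∀ (b : ZMod 2) (x : K), b * c x l = c (φ b * x) l := by
        intro b x
        rcases zmod2cases b with h | h <;> subst h
        · simp
        · simp
      rw [hmulc a]
      rw [Finset.sum_congr rfl fun j (_ : j ∈ Finset.univ) => hmulc (v j) _]
      have hsum : (∑ j : Fin m, c (φ (v j) * ((α : K) ^ ((m + 1) * i + (j : ℕ))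
            - (α : K) ^ ((m + 1) * i - 1))) l)
          = c (∑ j : Fin m, φ (v j) * ((α : K) ^ ((m + 1) * i + (j : ℕ))
            - (α : K) ^ ((m + 1) * i - 1))) l := by
        rw [map_sum c, Finset.sum_apply]
      rw [hsum, ← Pi.add_apply, ← map_add c]
      have hkey : ∑ j : Fin m, φ (v j) * ((α : K) ^ ((m + 1) * i + (j : ℕ))
            - (α : K) ^ ((m + 1) * i - 1))
          = (α : K) ^ ((m + 1) * i) * (∑ j : Fin m, φ (v j) * (α : K) ^ (j : ℕ))
            - (∑ j : Fin m, φ (v j)) * (α : K) ^ ((m + 1) * i - 1) := by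
        rw [Finset.mul_sum, Finset.sum_mul, ← Finset.sum_sub_distrib]
        exact Finset.sum_congr rfl fun j _ => by rw [pow_add]; ring
      rw [hkey, ← hψ v, ← map_sum]
      ring
  -- single vectors
  have hsymm_single : ∀ j : Fin m, c.symm (Pi.single j 1) = (α : K) ^ (j : ℕ) := by
    intro j
    have h2 : ∀ l : Fin m, φ ((Pi.single j 1 : Fin m → ZMod 2) l) * (α : K) ^ (l : ℕ)
        = if l = j then (α : K) ^ (l : ℕ) else 0 := by
      intro l
      rw [Pi.single_apply]
      by_cases h : l = j <;> simp [h]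
    rw [hψ, Finset.sum_congr rfl fun l _ => h2 l, Finset.sum_ite_eq' Finset.univ j]
    simp
  have hsinglec : ∀ j : Fin m, c ((α : K) ^ (j : ℕ)) = Pi.single j 1 := by
    intro j
    rw [← hsymm_single j, c.apply_symm_apply]
  -- N 0 is the identity
  have L0 : N 0 = 1 := by
    rw [hN0]
    ext r cc
    refine Fin.cases ?_ ?_ r
    · refine Fin.cases ?_ ?_ cc
      · simp [Matrix.one_apply]
      · intro l
        simp [Matrix.one_apply, (Fin.succ_ne_zero l).symm]
    · intro j
      refine Fin.cases ?_ ?_ cc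
      · simp [Matrix.one_apply, Fin.succ_ne_zero j]
      · intro l
        simp [Matrix.one_apply, hsinglec j, Pi.single_apply, Fin.succ_inj, eq_comm]
  -- invertibility for i ≥ 1
  have hUnit1 : ∀ i, 1 ≤ i → IsUnit (N i) := by
    intro i hi
    rw [← Matrix.vecMul_injective_iff_isUnit]
    intro u u' huu
    simp only at huu
    rw [← Fin.cons_self_tail u, ← Fin.cons_self_tail u', L1 i hi, L1 i hi] at huu
    have h0 : u 0 = u' 0 := by
      have := congrFun huu 0
      simpa using this
    have hT : c (φ (u 0) * (α : K) ^ ((m + 1) * i - 1)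
          + (α : K) ^ ((m + 1) * i) * c.symm (Fin.tail u)
          - φ (∑ j, Fin.tail u j) * (α : K) ^ ((m + 1) * i - 1))
        = c (φ (u' 0) * (α : K) ^ ((m + 1) * i - 1)
          + (α : K) ^ ((m + 1) * i) * c.symm (Fin.tail u')
          - φ (∑ j, Fin.tail u' j) * (α : K) ^ ((m + 1) * i - 1)) := by
      funext l
      have := congrFun huu l.succ
      simpa using this
    have hX := c.injective hT
    rw [h0] at hX
    set d : Fin m → ZMod 2 := Fin.tail u - Fin.tail u' with hd
    have heq : (α : K) ^ ((m + 1) * i) * c.symm d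
        = φ (∑ j, d j) * (α : K) ^ ((m + 1) * i - 1) := by
      have h1 : c.symm d = c.symm (Fin.tail u) - c.symm (Fin.tail u') := map_sub _ _ _
      have h2 : (∑ j, d j) = (∑ j, Fin.tail u j) - (∑ j, Fin.tail u' j) := by
        rw [hd, ← Finset.sum_sub_distrib]; rfl
      rw [h1, h2, map_sub φ]
      linear_combination hX
    have hkpos : 1 ≤ (m + 1) * i := by
      calc 1 = 1 * 1 := by ring
      _ ≤ (m + 1) * i := Nat.mul_le_mul (by omega) hi
    have hk : (m + 1) * i = ((m + 1) * i - 1) + 1 := by omega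
    rw [hk, pow_succ] at heq
    simp only [Nat.add_sub_cancel] at heq
    have heq2 : (α : K) ^ ((m + 1) * i - 1) * ((α : K) * c.symm d)
        = (α : K) ^ ((m + 1) * i - 1) * φ (∑ j, d j) := by
      linear_combination heq
    have hαψ := mul_left_cancel₀ (pow_ne_zero _ hαne0) heq2
    have hd0 : d = 0 := by
      refine cruxlem hm (α : K) hαne0 hαne1 h2K (⇑c.symm)
        (fun w => by
          rw [hψ w]
          exact (Finset.sum_congr rfl fun j _ => (hφ01 _ _)).symm)
        c.symm.injective d ?_
      have hite : (if (∑ j, d j) = 1 then (1 : K) else 0) = φ (∑ j, d j) := by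
        rw [hφ01, mul_one]
      rw [hite]
      exact hαψ
    have htails : Fin.tail u = Fin.tail u' := sub_eq_zero.mp hd0
    rw [← Fin.cons_self_tail u, ← Fin.cons_self_tail u', h0, htails]
  -- first column of N i
  have hcolN : ∀ i, ∀ r, i ≤ F → N i r 0 = if r = 0 then 1 else 0 := by
    intro i r hi
    rcases Nat.eq_zero_or_pos i with h0 | h1
    · subst h0; rw [L0, Matrix.one_apply]
    · refine Fin.cases ?_ ?_ r
      · simp [hent0 i h1]
      · intro j
        simp [hentj0 i h1 j, Fin.succ_ne_zero j]
  have hpart1 : ∀ i, i ≤ F → inPAutH m (N i) := by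
    intro i hi
    refine ⟨?_, fun r => hcolN i r hi⟩
    rcases Nat.eq_zero_or_pos i with h0 | h1
    · subst h0; rw [L0]; exact isUnit_one
    · exact hUnit1 i h1
  have hdet : ∀ i, i ≤ F → IsUnit (N i).det :=
    fun i hi => (Matrix.isUnit_iff_isUnit_det _).mp (hpart1 i hi).1
  refine ⟨hpart1, ?_, ?_⟩
  · -- distinctness of inverses
    intro i j hi hj hinv
    have hNij : N i = N j := by
      rw [← Matrix.nonsing_inv_nonsing_inv (N i) (hdet i hi), hinv,
        Matrix.nonsing_inv_nonsing_inv (N j) (hdet j hj)]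
    have hrow : ∀ i' j', i' ≤ F → j' ≤ F → 1 ≤ i' → 1 ≤ j' → N i' = N j' → i' = j' := by
      intro i' j' hi' hj' h1i h1j hN
      have hc' : c ((α : K) ^ ((m + 1) * i' - 1)) = c ((α : K) ^ ((m + 1) * j' - 1)) := by
        funext l
        have := congrFun (congrFun hN 0) l.succ
        rw [hent0l i' h1i l, hent0l j' h1j l] at this
        exact this
      have hββ := c.injective hc'
      have he := hpowinj _ _ (by have := hbnd i' hi'; omega) (by have := hbnd j' hj'; omega) hββ
      have hp1 : m + 1 ≤ (m + 1) * i' := Nat.le_mul_of_pos_right _ h1i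
      have hp2 : m + 1 ≤ (m + 1) * j' := Nat.le_mul_of_pos_right _ h1j
      have : (m + 1) * i' = (m + 1) * j' := by omega
      exact Nat.eq_of_mul_eq_mul_left (by omega) this
    have hmix0 : ∀ j', j' ≤ F → 1 ≤ j' → N 0 ≠ N j' := by
      intro j' hj' h1j hN
      have hc' : c (0 : K) = c ((α : K) ^ ((m + 1) * j' - 1)) := by
        funext l
        have := congrFun (congrFun hN 0) l.succ
        rw [hent0l j' h1j l, hN0] at this
        simpa using this
      have := c.injective hc'
      exact pow_ne_zero _ hαne0 this.symm
    rcases Nat.eq_zero_or_pos i with h0i | h1i <;> rcases Nat.eq_zero_or_pos j with h0j | h1j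
    · omega
    · exact absurd (h0i ▸ hNij) (hmix0 j hj h1j)
    · exact absurd (h0j ▸ hNij.symm) (hmix0 i hi h1i)
    · exact hrow i j hi hj h1i h1j hNij
  · -- the PD-set property
    intro E hE
    by_contra hcon
    push_neg at hcon
    -- inverse action facts
    have hcol0 : ∀ i, i ≤ F → ∀ w : Fin (m + 1) → ZMod 2,
        Matrix.vecMul w (N i) 0 = w 0 := by
      intro i hi w
      rw [vmlem]
      rw [hcolN i 0 hi, if_pos rfl, mul_one]
      rw [Finset.sum_congr rfl fun j (_ : j ∈ Finset.univ) => by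
        rw [hcolN i j.succ hi, if_neg (Fin.succ_ne_zero j), mul_zero]]
      simp
    have hcolInv : ∀ i, i ≤ F → ∀ w : Fin (m + 1) → ZMod 2,
        Matrix.vecMul w (N i)⁻¹ 0 = w 0 := by
      intro i hi w
      have hw : Matrix.vecMul (Matrix.vecMul w (N i)⁻¹) (N i) = w := by
        rw [Matrix.vecMul_vecMul, Matrix.nonsing_inv_mul _ (hdet i hi), Matrix.vecMul_one]
      conv_rhs => rw [← hw]
      rw [hcol0 i hi]
    have hactInv : ∀ i, i ≤ F → ∀ v, hadAct m (N i) (hadAct m (N i)⁻¹ v) = v := by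
      intro i hi v
      have hcons : Fin.cons 1 (hadAct m (N i)⁻¹ v) = Matrix.vecMul (Fin.cons 1 v) (N i)⁻¹ := by
        funext r
        refine Fin.cases ?_ ?_ r
        · rw [Fin.cons_zero, hcolInv i hi, Fin.cons_zero]
        · intro l; rw [Fin.cons_succ]; rfl
      funext j
      show Matrix.vecMul (Fin.cons 1 (hadAct m (N i)⁻¹ v)) (N i) j.succ = v j
      rw [hcons, Matrix.vecMul_vecMul, Matrix.nonsing_inv_mul _ (hdet i hi),
        Matrix.vecMul_one, Fin.cons_succ]
    have memInfo : ∀ v, v ∈ hadInfo m ↔ (v = 0 ∨ ∃ j : Fin m, v = Pi.single j 1) := by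
      intro v
      simp [hadInfo, eq_comm]
    have IM0 : ∀ v, hadAct m (N 0) v = v := by
      intro v
      funext j
      show Matrix.vecMul (Fin.cons 1 v) (N 0) j.succ = v j
      rw [L0, Matrix.vecMul_one, Fin.cons_succ]
    have hact1 : ∀ i, 1 ≤ i → ∀ v, hadAct m (N i) v
        = c ((α : K) ^ ((m + 1) * i - 1) + (α : K) ^ ((m + 1) * i) * c.symm v
          - φ (∑ j, v j) * (α : K) ^ ((m + 1) * i - 1)) := by
      intro i hi v
      funext j
      show Matrix.vecMul (Fin.cons 1 v) (N i) j.succ = _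
      rw [L1 i hi, Fin.cons_succ, map_one, one_mul]
    have IM : ∀ i, 1 ≤ i → ∀ v ∈ hadInfo m, ∃ e, (m + 1) * i - 1 ≤ e ∧
        e ≤ (m + 1) * i + m - 1 ∧ hadAct m (N i) v = c ((α : K) ^ e) := by
      intro i hi v hv
      rcases (memInfo v).mp hv with rfl | ⟨j, rfl⟩
      · refine ⟨(m + 1) * i - 1, le_refl _, by omega, ?_⟩
        rw [hact1 i hi]
        congr 1
        rw [map_zero]
        simp
      · refine ⟨(m + 1) * i + (j : ℕ), by omega, by have := j.isLt; omega, ?_⟩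
        rw [hact1 i hi]
        congr 1
        have hsum1 : (∑ l, Pi.single j (1 : ZMod 2) l) = 1 := by
          rw [Finset.sum_congr rfl fun l (_ : l ∈ Finset.univ) => Pi.single_apply j 1 l,
            Finset.sum_ite_eq' Finset.univ j]
          simp
        rw [hsymm_single j, hsum1, map_one, pow_add, one_mul]
        ring
    -- choose witnesses
    have key : ∀ i : Fin (F + 1), ∃ v, v ∈ E ∧ ∃ u, u ∈ hadInfo m ∧ v = hadAct m (N i) u := by
      intro i
      have hi : (i : ℕ) ≤ F := by omega
      obtain ⟨v, hvE, hvi⟩ := hcon i hi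
      exact ⟨v, hvE, hadAct m (N i)⁻¹ v, hvi, (hactInv i hi v).symm⟩
    choose χ hχE u hu hχ using key
    have haux0 : ∀ a : Fin (F + 1), (a : ℕ) = 0 → χ a ∈ hadInfo m := by
      intro a ha
      rw [hχ a, ha, IM0]
      exact hu a
    have hauxP : ∀ a : Fin (F + 1), 1 ≤ (a : ℕ) → ∃ e, (m + 1) * (a : ℕ) - 1 ≤ e ∧
        e ≤ (m + 1) * (a : ℕ) + m - 1 ∧ χ a = c ((α : K) ^ e) := by
      intro a ha
      obtain ⟨e, h1, h2, h3⟩ := IM (a : ℕ) ha (u a) (hu a)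
      exact ⟨e, h1, h2, (hχ a).trans h3⟩
    have hmix : ∀ a b : Fin (F + 1), (a : ℕ) = 0 → 1 ≤ (b : ℕ) → χ a ≠ χ b := by
      intro a b ha hb heq
      obtain ⟨e, he1, he2, he3⟩ := hauxP b hb
      have hχa := haux0 a ha
      rw [heq, he3] at hχa
      have hbF : (b : ℕ) ≤ F := by omega
      have heb : e ≤ 2 ^ m - 2 := by have := hbnd (b : ℕ) hbF; omega
      have hp2 : m + 1 ≤ (m + 1) * (b : ℕ) := Nat.le_mul_of_pos_right _ hb
      rcases (memInfo _).mp hχa with h0 | ⟨l, hl⟩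
      · have : (α : K) ^ e = 0 := by
          apply c.injective
          rw [h0, map_zero]
        exact pow_ne_zero e hαne0 this
      · have hcc : c ((α : K) ^ e) = c ((α : K) ^ (l : ℕ)) := by
          rw [hl, hsinglec l]
        have hel := hpowinj e (l : ℕ) heb (by have := l.isLt; omega) (c.injective hcc)
        have := l.isLt
        omega
    have hinjOn : Set.InjOn χ ↑(Finset.univ : Finset (Fin (F + 1))) := by
      intro a _ b _ hab
      rcases Nat.eq_zero_or_pos (a : ℕ) with h0a | h1a <;>
        rcases Nat.eq_zero_or_pos (b : ℕ) with h0b | h1b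
      · exact Fin.ext (by omega)
      · exact absurd hab (hmix a b h0a h1b)
      · exact absurd hab.symm (hmix b a h0b h1a)
      · obtain ⟨e, he1, he2, he3⟩ := hauxP a h1a
        obtain ⟨e', hf1, hf2, hf3⟩ := hauxP b h1b
        have haF : (a : ℕ) ≤ F := by omega
        have hbF : (b : ℕ) ≤ F := by omega
        have hee : e = e' := by
          apply hpowinj e e' (by have := hbnd (a : ℕ) haF; omega)
            (by have := hbnd (b : ℕ) hbF; omega)
          apply c.injective
          rw [← he3, ← hf3, hab]
        have hab' : (a : ℕ) = (b : ℕ) := by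
          rcases lt_trichotomy (a : ℕ) (b : ℕ) with h | h | h
          · exfalso
            have hmul : (m + 1) * ((a : ℕ) + 1) ≤ (m + 1) * (b : ℕ) :=
              Nat.mul_le_mul_left _ (by omega)
            have hexp : (m + 1) * ((a : ℕ) + 1) = (m + 1) * (a : ℕ) + (m + 1) := by ring
            have hp1 : m + 1 ≤ (m + 1) * (a : ℕ) := Nat.le_mul_of_pos_right _ h1a
            have hp2 : m + 1 ≤ (m + 1) * (b : ℕ) := Nat.le_mul_of_pos_right _ h1b
            omega
          · exact h
          · exfalso
            have hmul : (m + 1) * ((b : ℕ) + 1) ≤ (m + 1) * (a : ℕ) :=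
              Nat.mul_le_mul_left _ (by omega)
            have hexp : (m + 1) * ((b : ℕ) + 1) = (m + 1) * (b : ℕ) + (m + 1) := by ring
            have hp1 : m + 1 ≤ (m + 1) * (a : ℕ) := Nat.le_mul_of_pos_right _ h1a
            have hp2 : m + 1 ≤ (m + 1) * (b : ℕ) := Nat.le_mul_of_pos_right _ h1b
            omega
        exact Fin.ext hab'
    have hcard := Finset.card_le_card_of_injOn χ (fun a _ => hχE a) hinjOn
    rw [Finset.card_univ, Fintype.card_fin, hE] at hcard
    omega
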